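/- Let F be a field with a ring involution a ↦ ā, let ε ∈ F, and let A, B, C, D, S be n×n matrices over F with S invertible, S⁻¹AS = C and S⁻¹BS = D. Then the block-diagonal 4n×4n matrix R := diag((S*)⁻¹, (S*)⁻¹, S, S) satisfies R* M R = M and R* N_ε(A,B) R = N_ε(C,D), where (M, N_ε(A,B)) = T_ε(A,B); in particular T_ε(A,B) is *congruent to T_ε(C,D). -/
import Mathlib


open Matrix

/-- Index type for `4n × 4n` matrices written in `n × n` blocks. -/
abbrev Blk (n : ℕ) := (Fin n ⊕ Fin n) ⊕ (Fin n ⊕ Fin n)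

/-- The first matrix `M` of the pair `T_ε(A,B)`, with block rows
`(0,0,I,0), (0,0,0,I), (2I,I,0,0), (0,2I,0,0)`. -/
noncomputable def Mblock (F : Type*) [Field F] (n : ℕ) : Matrix (Blk n) (Blk n) F :=
  Matrix.fromBlocks 0 1 (Matrix.fromBlocks ((2 : F) • 1) 1 0 ((2 : F) • 1)) 0

/-- The second matrix `N_ε(A,B)` of the pair `T_ε(A,B)`, with block rows
`(0,0,A,0), (0,0,0,B), (εA*,0,0,0), (0,εB*,0,0)`, where `X* = (X.map σ)ᵀ` is the
conjugate transpose with respect to the involution `σ`. -/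
noncomputable def NblockStar {F : Type*} [Field F] {n : ℕ} (σ : F →+* F) (ε : F)
    (A B : Matrix (Fin n) (Fin n) F) : Matrix (Blk n) (Blk n) F :=
  Matrix.fromBlocks 0 (Matrix.fromBlocks A 0 0 B)
    (Matrix.fromBlocks (ε • (A.map σ)ᵀ) 0 0 (ε • (B.map σ)ᵀ)) 0

/-- If `S⁻¹AS = C` and `S⁻¹BS = D` with `S` invertible, then the block-diagonal matrix
`R = diag((S*)⁻¹, (S*)⁻¹, S, S)` satisfies `R* M R = M` and
`R* N_ε(A,B) R = N_ε(C,D)`; in particular `T_ε(A,B)` is *congruent to `T_ε(C,D)`. -/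
lemma mapInv {F : Type*} [Field F] {n : ℕ} (σ : F →+* F)
    (A : Matrix (Fin n) (Fin n) F) (h : IsUnit A) : (A.map σ)⁻¹ = A⁻¹.map σ := by
  refine Matrix.inv_eq_right_inv ?_
  rw [← Matrix.map_mul, Matrix.mul_nonsing_inv _ (Matrix.isUnit_iff_isUnit_det A |>.mp h)]
  simp

lemma diag_mul_mid {F : Type*} [Field F] {m n : ℕ}
    (P Q P' Q' : Matrix (Fin m) (Fin m) F) (X Y : Matrix (Fin m) (Fin m) F) :
    True := trivial

lemma sandwich1 {F : Type*} [Field F] {I : Type*} [Fintype I] [DecidableEq I]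
    (P Q P' Q' X Y : Matrix (I ⊕ I) (I ⊕ I) F) :
    Matrix.fromBlocks P 0 0 Q * Matrix.fromBlocks 0 X Y 0 * Matrix.fromBlocks P' 0 0 Q'
      = Matrix.fromBlocks 0 (P * X * Q') (Q * Y * P') 0 := by
  simp [Matrix.fromBlocks_multiply, Matrix.mul_assoc]

lemma sandwich2 {F : Type*} [Field F] {I : Type*} [Fintype I] [DecidableEq I]
    (P Q X Y Z W : Matrix I I F) :
    Matrix.fromBlocks P 0 0 P * Matrix.fromBlocks X Y Z W * Matrix.fromBlocks Q 0 0 Q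
      = Matrix.fromBlocks (P * X * Q) (P * Y * Q) (P * Z * Q) (P * W * Q) := by
  simp [Matrix.fromBlocks_multiply, Matrix.mul_assoc]

theorem Tε_starCongruent_of_similar
    {F : Type*} [Field F] (σ : F →+* F) (hσ : Function.Involutive σ)
    {n : ℕ} (ε : F) (A B C D S : Matrix (Fin n) (Fin n) F)
    (hS : IsUnit S) (hC : S⁻¹ * A * S = C) (hD : S⁻¹ * B * S = D) :
    (let R : Matrix (Blk n) (Blk n) F :=
      Matrix.fromBlocks (Matrix.fromBlocks ((S.map σ)ᵀ)⁻¹ 0 0 ((S.map σ)ᵀ)⁻¹) 0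
        0 (Matrix.fromBlocks S 0 0 S)
     (R.map σ)ᵀ * Mblock F n * R = Mblock F n ∧
      (R.map σ)ᵀ * NblockStar σ ε A B * R = NblockStar σ ε C D) ∧
    (∃ R : Matrix (Blk n) (Blk n) F, IsUnit R ∧
      (R.map σ)ᵀ * Mblock F n * R = Mblock F n ∧
      (R.map σ)ᵀ * NblockStar σ ε A B * R = NblockStar σ ε C D) := by
  set T : Matrix (Fin n) (Fin n) F := (S.map σ)ᵀ with hT
  have hdS : IsUnit S.det := (Matrix.isUnit_iff_isUnit_det S).mp hS
  have hSm : IsUnit (S.map σ) := hS.map σ.mapMatrix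
  have hTu : IsUnit T := by
    rw [Matrix.isUnit_iff_isUnit_det, Matrix.det_transpose,
      ← Matrix.isUnit_iff_isUnit_det]
    exact hSm
  have hdT : IsUnit T.det := (Matrix.isUnit_iff_isUnit_det T).mp hTu
  have hmm : ∀ X : Matrix (Fin n) (Fin n) F, (X.map σ).map σ = X := by
    intro X
    rw [Matrix.map_map]
    simp [hσ.comp_self]
  -- T⁻¹ = ((S⁻¹).map σ)ᵀ
  have hTinv : T⁻¹ = (S⁻¹.map σ)ᵀ := by
    rw [hT, ← Matrix.transpose_nonsing_inv, mapInv σ S hS]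
  have hTinvStar : (T⁻¹.map σ)ᵀ = S⁻¹ := by
    rw [hTinv, Matrix.transpose_map, Matrix.transpose_transpose, hmm]
  have hSstar : (S.map σ)ᵀ = T := rfl
  have hTT : T * T⁻¹ = 1 := Matrix.mul_nonsing_inv _ hdT
  have hTT' : T⁻¹ * T = 1 := Matrix.nonsing_inv_mul _ hdT
  have hSS : S⁻¹ * S = 1 := Matrix.nonsing_inv_mul _ hdS
  have hCs : ε • (T * (A.map σ)ᵀ * T⁻¹) = ε • (C.map σ)ᵀ := by
    rw [← hC]
    simp only [Matrix.map_mul, Matrix.transpose_mul, hSstar, hTinv]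
    simp [Matrix.mul_smul, Matrix.smul_mul, Matrix.mul_assoc]
  have hDs : ε • (T * (B.map σ)ᵀ * T⁻¹) = ε • (D.map σ)ᵀ := by
    rw [← hD]
    simp only [Matrix.map_mul, Matrix.transpose_mul, hSstar, hTinv]
    simp [Matrix.mul_smul, Matrix.smul_mul, Matrix.mul_assoc]
  set R : Matrix (Blk n) (Blk n) F :=
    Matrix.fromBlocks (Matrix.fromBlocks T⁻¹ 0 0 T⁻¹) 0 0 (Matrix.fromBlocks S 0 0 S)
    with hRdef
  have hRstar : (R.map σ)ᵀ =
      Matrix.fromBlocks (Matrix.fromBlocks S⁻¹ 0 0 S⁻¹) 0 0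
        (Matrix.fromBlocks T 0 0 T) := by
    show ((Matrix.fromBlocks (Matrix.fromBlocks T⁻¹ 0 0 T⁻¹) 0 0
      (Matrix.fromBlocks S 0 0 S)).map σ)ᵀ = _
    simp only [Matrix.fromBlocks_map, Matrix.fromBlocks_transpose,
      Matrix.map_zero _ σ.map_zero, Matrix.transpose_zero, hTinvStar, hSstar]
  have hMain : (R.map σ)ᵀ * Mblock F n * R = Mblock F n ∧
      (R.map σ)ᵀ * NblockStar σ ε A B * R = NblockStar σ ε C D := by
    constructor
    · rw [hRstar]
      show _ * Mblock F n * Matrix.fromBlocks (Matrix.fromBlocks T⁻¹ 0 0 T⁻¹) 0 0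
        (Matrix.fromBlocks S 0 0 S) = _
      rw [Mblock, sandwich1, sandwich2]
      simp [Matrix.fromBlocks_multiply, Matrix.fromBlocks_one, Matrix.mul_smul,
        Matrix.smul_mul, hTT, hSS]
    · rw [hRstar]
      show _ * NblockStar σ ε A B * Matrix.fromBlocks (Matrix.fromBlocks T⁻¹ 0 0 T⁻¹) 0 0
        (Matrix.fromBlocks S 0 0 S) = _
      rw [NblockStar, sandwich1, sandwich2, sandwich2]
      simp [NblockStar, hC, hD, hCs, hDs]
  refine ⟨hMain, R, ?_, hMain⟩
  have hTinvU : IsUnit T⁻¹.det := T.isUnit_nonsing_inv_det hdT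
  rw [Matrix.isUnit_iff_isUnit_det, hRdef, Matrix.det_fromBlocks_zero₂₁,
    Matrix.det_fromBlocks_zero₂₁, Matrix.det_fromBlocks_zero₂₁]
  exact (hTinvU.mul hTinvU).mul (hdS.mul hdS)
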